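/- arXiv:2504.06700 — 3 statements merged into one kernel-verified Lean document; each statement's English description precedes it below -/
import Mathlib

section
/- Let P ⊆ V, v ∈ P with max_{u∈P} x(v,u) ≥ 1/2, and let (Q1, Q2) with v ∈ Q1 be the pair returned by One-Half-Refine-Cut(P, v, x). Then Σ over pairs {i,j} ∈ NFPrs₀(Q1,Q2) with i ∈ Q1 and j ∈ Q2 ∩ B_{3/4} of ( min(x(v,j), 1/2) − x(v,i) ) is at least (1/4) times the number of such pairs. -/
open Finset
open scoped Classical

/-- `cutBall x v P r` is the set of elements of `P` at distance `< r` from `v`. -/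
noncomputable def cutBall {V : Type*} [DecidableEq V]
    (x : V → V → ℝ) (v : V) (P : Finset V) (r : ℝ) : Finset V :=
  P.filter fun u => x v u < r

/-- The procedure One-Half-Refine-Cut: it returns `({v}, P ∖ {v})` if
`Σ_{q∈B_{1/2}} x(v,q) ≥ (1/2)|B_{1/2}| − (1/4)|B_{3/4}| − 1/4`,
and `(B_{1/2}, P ∖ B_{1/2})` otherwise. -/
noncomputable def oneHalfCut {V : Type*} [DecidableEq V]
    (x : V → V → ℝ) (P : Finset V) (v : V) : Finset V × Finset V :=
  if (1 / 2 : ℝ) * (cutBall x v P (1 / 2)).card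
        - (1 / 4) * (cutBall x v P (3 / 4)).card - 1 / 4
      ≤ ∑ q ∈ cutBall x v P (1 / 2), x v q
  then ({v}, P \ {v})
  else (cutBall x v P (1 / 2), P \ cutBall x v P (1 / 2))

/-- Average distance of unsaturated cut pairs for One-Half-Refine-Cut
(Lemma A.3): for the pair `(Q1, Q2)` returned by the procedure, the sum of
`min(x(v,j), 1/2) − x(v,i)` over the non-extreme (unsaturated) cut pairs
`{i,j}` with `i ∈ Q1` and `j ∈ Q2 ∩ B_{3/4}` is at least `1/4` times the number
of such pairs. -/
theorem stmt9 {V : Type*} [Fintype V] [DecidableEq V]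
    (x : V → V → ℝ)
    (hsym : ∀ u w, x u w = x w u) (hdiag : ∀ u, x u u = 0)
    (hnn : ∀ u w, 0 ≤ x u w) (hub : ∀ u w, x u w ≤ 1)
    (htri : ∀ u w p, x u w ≤ x u p + x p w)
    (P : Finset V) (v : V) (hv : v ∈ P) (hmax : ∃ u ∈ P, 1 / 2 ≤ x v u)
    (Q1 Q2 : Finset V) (hcut : (Q1, Q2) = oneHalfCut x P v) :
    (1 / 4 : ℝ) *
        ((Q1 ×ˢ (Q2 ∩ cutBall x v P (3 / 4))).filter
            (fun p => x p.1 p.2 < 1)).card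
      ≤ ∑ p ∈ (Q1 ×ˢ (Q2 ∩ cutBall x v P (3 / 4))).filter
            (fun p => x p.1 p.2 < 1),
          (min (x v p.2) (1 / 2) - x v p.1) := by
  set B2 := cutBall x v P (1/2) with hB2
  set B4 := cutBall x v P (3/4) with hB4
  have hmemB2 : ∀ u, u ∈ B2 ↔ u ∈ P ∧ x v u < 1/2 := by
    intro u; simp [hB2, cutBall]
  have hmemB4 : ∀ u, u ∈ B4 ↔ u ∈ P ∧ x v u < 3/4 := by
    intro u; simp [hB4, cutBall]
  have hsub : B2 ⊆ B4 := by
    intro u hu; rw [hmemB2] at hu; rw [hmemB4]; exact ⟨hu.1, by linarith [hu.2]⟩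
  have hvB4 : v ∈ B4 := (hmemB4 v).2 ⟨hv, by rw [hdiag]; norm_num⟩
  unfold oneHalfCut at hcut
  split_ifs at hcut with hcond
  · -- Case 1 : Q1 = {v}
    rw [Prod.mk.injEq] at hcut
    obtain ⟨h1, h2⟩ := hcut
    subst h1; subst h2
    have hT : (P \ {v}) ∩ B4 = B4.erase v := by
      ext u
      simp only [mem_inter, mem_sdiff, mem_singleton, mem_erase, hmemB4]
      tauto
    have hfil : (({v} : Finset V) ×ˢ (B4.erase v)).filter
        (fun p => x p.1 p.2 < 1) = ({v} : Finset V) ×ˢ (B4.erase v) := by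
      apply filter_true_of_mem
      intro p hp
      rw [mem_product, mem_singleton] at hp
      have := ((hmemB4 p.2).1 (mem_of_mem_erase hp.2)).2
      rw [hp.1]; linarith
    rw [hT, hfil, sum_product, sum_singleton, card_product, card_singleton, one_mul]
    simp only [hdiag, sub_zero]
    have hsum4 : ∑ j ∈ B4, min (x v j) (1/2)
        = (∑ j ∈ B2, x v j) + (1/2) * ((B4.card : ℝ) - B2.card) := by
      rw [← sum_sdiff hsub]
      have e1 : ∑ j ∈ B4 \ B2, min (x v j) (1/2) = ∑ j ∈ B4 \ B2, (1/2 : ℝ) := by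
        apply sum_congr rfl
        intro j hj
        rw [mem_sdiff, hmemB4, hmemB2] at hj
        have : (1/2 : ℝ) ≤ x v j := by
          by_contra h; exact hj.2 ⟨hj.1.1, by linarith⟩
        exact min_eq_right this
      have e2 : ∑ j ∈ B2, min (x v j) (1/2) = ∑ j ∈ B2, x v j := by
        apply sum_congr rfl
        intro j hj
        exact min_eq_left (le_of_lt ((hmemB2 j).1 hj).2)
      rw [e1, e2, sum_const]
      have hc : (B4 \ B2).card = B4.card - B2.card := card_sdiff_of_subset hsub
      rw [hc, nsmul_eq_mul, Nat.cast_sub (card_le_card hsub)]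
      ring
    have herase : ∑ j ∈ B4.erase v, min (x v j) (1/2)
        = ∑ j ∈ B4, min (x v j) (1/2) := by
      rw [← sum_erase_add B4 _ hvB4, hdiag]
      simp
    have hcarde : ((B4.erase v).card : ℝ) = (B4.card : ℝ) - 1 := by
      rw [card_erase_of_mem hvB4, Nat.cast_sub (by exact card_pos.2 ⟨v, hvB4⟩)]
      simp
    rw [herase, hsum4, hcarde]
    have hle : (B2.card : ℝ) ≤ B4.card := Nat.cast_le.2 (card_le_card hsub)
    linarith [hcond]
  · -- Case 2 : Q1 = B2
    push_neg at hcond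
    rw [Prod.mk.injEq] at hcut
    obtain ⟨h1, h2⟩ := hcut
    subst h1; subst h2
    have hT : (P \ B2) ∩ B4 = B4 \ B2 := by
      ext u
      simp only [mem_inter, mem_sdiff, hmemB4]
      tauto
    rw [hT]
    set T := B4 \ B2 with hTdef
    -- rewrite both sides as sums over j ∈ T
    have hcard : (((B2 ×ˢ T).filter (fun p => x p.1 p.2 < 1)).card : ℝ)
        = ∑ j ∈ T, ((B2.filter (fun i => x i j < 1)).card : ℝ) := by
      rw [card_eq_sum_ones, Nat.cast_sum]
      push_cast
      rw [sum_filter, sum_product_right]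
      apply sum_congr rfl
      intro j _
      rw [card_eq_sum_ones, Nat.cast_sum, sum_filter]
      push_cast
      rfl
    have hsum : ∑ p ∈ (B2 ×ˢ T).filter (fun p => x p.1 p.2 < 1),
          (min (x v p.2) (1/2) - x v p.1)
        = ∑ j ∈ T, ∑ i ∈ B2.filter (fun i => x i j < 1), ((1:ℝ)/2 - x v i) := by
      rw [sum_filter, sum_product_right]
      apply sum_congr rfl
      intro j hj
      rw [sum_filter]
      apply sum_congr rfl
      intro i _
      have hjm : j ∈ B4 ∧ j ∉ B2 := mem_sdiff.1 hj
      have : (1/2 : ℝ) ≤ x v j := by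
        by_contra h
        exact hjm.2 ((hmemB2 j).2 ⟨((hmemB4 j).1 hjm.1).1, by linarith⟩)
      rw [min_eq_right this]
    rw [hcard, hsum, mul_sum]
    apply sum_le_sum
    intro j hj
    have hjm := mem_sdiff.1 hj
    have hj4 := (hmemB4 j).1 hjm.1
    set Sj := B2.filter (fun i => x i j < 1) with hSj
    -- bound sum over complement
    have hcompl : ∑ i ∈ B2.filter (fun i => ¬ x i j < 1), ((1:ℝ)/2 - x v i)
        ≤ (1/4) * (B2.filter (fun i => ¬ x i j < 1)).card := by
      have h := Finset.sum_le_card_nsmul (B2.filter (fun i => ¬ x i j < 1))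
        (fun i => (1:ℝ)/2 - x v i) (1/4) ?_
      · rw [nsmul_eq_mul] at h
        linarith
      · intro i hi
        rw [mem_filter] at hi
        have h1 : (1:ℝ) ≤ x i j := le_of_not_gt hi.2
        have h2 : x i j ≤ x i v + x v j := htri i j v
        have h3 : x i v = x v i := hsym i v
        linarith [hj4.2]
    have hsplit : ∑ i ∈ Sj, ((1:ℝ)/2 - x v i)
          + ∑ i ∈ B2.filter (fun i => ¬ x i j < 1), ((1:ℝ)/2 - x v i)
        = ∑ i ∈ B2, ((1:ℝ)/2 - x v i) := sum_filter_add_sum_filter_not B2 _ _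
    have hcards : (Sj.card : ℝ) + (B2.filter (fun i => ¬ x i j < 1)).card
        = B2.card := by
      rw [← Nat.cast_add]
      norm_cast
      exact card_filter_add_card_filter_not _
    have hB2sum : ∑ i ∈ B2, ((1:ℝ)/2 - x v i)
        = (1/2) * B2.card - ∑ i ∈ B2, x v i := by
      rw [sum_sub_distrib, sum_const, nsmul_eq_mul]
      ring
    have hle : (B2.card : ℝ) ≤ B4.card := Nat.cast_le.2 (card_le_card hsub)
    linarith [hcond, hcompl, hsplit, hcards, hB2sum]
end

section
/- Let x be a feasible solution of LP-(L0), fix a layer t, let P ⊆ V and v ∈ P with max_{u∈P} x^(t)(v,u) ≥ 1/2, and let (Q1, Q2) with v ∈ Q1 be the pair returned by One-Half-Refine-Cut(P, v, x^(t)); set Q2' := Q2 ∩ B_{3/4}. Then Σ_{ {i,j}∈NFPrs₀(Q1,Q2), {i,j}∈E^(t) } x^(t)(i,j) + Σ_{ {i,j}∈NFPrs₀(Q1,Q2), {i,j}∈NE^(t) } (1 − x^(t)(i,j)) + (1/4)·|{ {i,j}∈NFPrs₀(Q1,Q2) : i∈Q1, j∈Q2', {i,j}∈NE^(t) }| ≥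 Σ_{ {i,j}∈NFPrs₀(Q1,Q2), i∈Q1, j∈Q2' } ( min(x^(t)(v,j),1/2) − x^(t)(v,i) ) + Σ_{ {i,j}∈NFPrs₀(Q1,Q2), i∈Q1, j∈Q2∖Q2', {i,j}∈E^(t) } x^(t)(i,j). -/
open Finset
open scoped Classical

/-- Feasibility for LP-(L0), with the layer functions given as symmetric
functions on ordered pairs: each layer `t ∈ {1,…,ℓ}` is symmetric, vanishes on
the diagonal, takes values in `[0,1]` and satisfies the triangle inequality;
the values are monotone non-increasing bottom-up, and the convention
`x^(ℓ+1) := 0` holds. -/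
def LPL0FeasibleFn {V : Type*} (ℓ : ℕ) (x : ℕ → V → V → ℝ) : Prop :=
  (∀ t ∈ Finset.Icc 1 ℓ, ∀ u w : V, x t u w = x t w u) ∧
  (∀ t ∈ Finset.Icc 1 ℓ, ∀ u : V, x t u u = 0) ∧
  (∀ t ∈ Finset.Icc 1 ℓ, ∀ u w p : V, x t u w ≤ x t u p + x t p w) ∧
  (∀ t ∈ Finset.Icc 1 ℓ, ∀ u w : V, 0 ≤ x t u w ∧ x t u w ≤ 1) ∧
  (∀ t, 1 ≤ t → t < ℓ → ∀ u w : V, x (t + 1) u w ≤ x t u w) ∧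
  (∀ u w : V, x (ℓ + 1) u w = 0)

/-- Lemma A.4: for a feasible LP-(L0) solution `x`, a layer `t`, and the pair
`(Q1, Q2)` returned by One-Half-Refine-Cut at layer `t` (with `Q2' = Q2 ∩ B_{3/4}`):
`Σ_{NFPrs₀∩E^(t)} x^(t)(i,j) + Σ_{NFPrs₀∩NE^(t)} (1 − x^(t)(i,j))
  + (1/4)|{(i,j)∈NFPrs₀ : i∈Q1, j∈Q2', {i,j}∈NE^(t)}|
  ≥ Σ_{(i,j)∈NFPrs₀, i∈Q1, j∈Q2'} (min(x^(t)(v,j),1/2) − x^(t)(v,i))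
  + Σ_{(i,j)∈NFPrs₀, i∈Q1, j∈Q2∖Q2', {i,j}∈E^(t)} x^(t)(i,j)`,
where `E^(t) = {{u,v} : t_{u,v} < t}` and `NE^(t) = {{u,v} : t_{u,v} ≥ t}`. -/
theorem stmt10 {V : Type*} [Fintype V] [DecidableEq V]
    (ℓ : ℕ) (hℓ : 1 ≤ ℓ)
    (x : ℕ → V → V → ℝ) (hfeas : LPL0FeasibleFn ℓ x)
    (tlay : V → V → ℕ) (htsym : ∀ u w, tlay u w = tlay w u)
    (htrange : ∀ u w : V, u ≠ w → tlay u w ∈ Finset.Icc 1 ℓ)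
    (t : ℕ) (ht : t ∈ Finset.Icc 1 ℓ)
    (P : Finset V) (v : V) (hv : v ∈ P) (hmax : ∃ u ∈ P, 1 / 2 ≤ x t v u)
    (Q1 Q2 : Finset V) (hcut : (Q1, Q2) = oneHalfCut (x t) P v) :
    (∑ p ∈ (Q1 ×ˢ Q2).filter
          (fun p => x t p.1 p.2 < 1 ∧ tlay p.1 p.2 < t),
        x t p.1 p.2)
      + (∑ p ∈ (Q1 ×ˢ Q2).filter
            (fun p => x t p.1 p.2 < 1 ∧ t ≤ tlay p.1 p.2),
          (1 - x t p.1 p.2))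
      + (1 / 4 : ℝ) *
          ((Q1 ×ˢ (Q2 ∩ cutBall (x t) v P (3 / 4))).filter
            (fun p => x t p.1 p.2 < 1 ∧ t ≤ tlay p.1 p.2)).card
    ≥ (∑ p ∈ (Q1 ×ˢ (Q2 ∩ cutBall (x t) v P (3 / 4))).filter
            (fun p => x t p.1 p.2 < 1),
          (min (x t v p.2) (1 / 2) - x t v p.1))
      + ∑ p ∈ (Q1 ×ˢ (Q2 \ (Q2 ∩ cutBall (x t) v P (3 / 4)))).filter
            (fun p => x t p.1 p.2 < 1 ∧ tlay p.1 p.2 < t),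
          x t p.1 p.2 := by
  classical
  obtain ⟨hsym, hdiag, htri, hbound, -, -⟩ := hfeas
  have hprod : Q1 ×ˢ (Q2 ∩ cutBall (x t) v P (3 / 4))
      = (Q1 ×ˢ Q2).filter (fun p => p.2 ∈ cutBall (x t) v P (3 / 4)) := by
    ext p
    simp only [Finset.mem_product, Finset.mem_filter, Finset.mem_inter]
    tauto
  have hprod2 : Q1 ×ˢ (Q2 \ (Q2 ∩ cutBall (x t) v P (3 / 4)))
      = (Q1 ×ˢ Q2).filter (fun p => ¬ p.2 ∈ cutBall (x t) v P (3 / 4)) := by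
    ext p
    simp only [Finset.mem_product, Finset.mem_filter, Finset.mem_sdiff, Finset.mem_inter]
    tauto
  rw [ge_iff_le, hprod, hprod2, Finset.filter_filter, Finset.filter_filter,
    Finset.filter_filter,
    Finset.sum_filter, Finset.sum_filter, Finset.sum_filter, Finset.sum_filter,
    Finset.card_filter]
  push_cast
  rw [Finset.mul_sum, ← Finset.sum_add_distrib, ← Finset.sum_add_distrib,
    ← Finset.sum_add_distrib]
  apply Finset.sum_le_sum
  intro p hp
  have h0 : (0 : ℝ) ≤ x t v p.1 := (hbound t ht v p.1).1
  have h1 : x t p.1 p.2 ≤ 1 := (hbound t ht p.1 p.2).2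
  have h1' : (0 : ℝ) ≤ x t p.1 p.2 := (hbound t ht p.1 p.2).1
  have htri1 : x t v p.2 ≤ x t v p.1 + x t p.1 p.2 := htri t ht v p.2 p.1
  have htri2 : x t p.1 p.2 ≤ x t p.1 v + x t v p.2 := htri t ht p.1 p.2 v
  have hsv : x t p.1 v = x t v p.1 := hsym t ht p.1 v
  rw [hsv] at htri2
  have hmin1 : min (x t v p.2) (1 / 2 : ℝ) ≤ x t v p.2 := min_le_left _ _
  have hmin2 : min (x t v p.2) (1 / 2 : ℝ) ≤ 1 / 2 := min_le_right _ _
  by_cases hb : p.2 ∈ cutBall (x t) v P (3 / 4)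
  · have hbj : x t v p.2 < 3 / 4 := (Finset.mem_filter.mp hb).2
    by_cases hx : x t p.1 p.2 < 1
    · by_cases hl : tlay p.1 p.2 < t
      · simp only [hb, hx, hl, not_le.mpr hl, not_true, and_true, true_and, and_false,
          false_and, if_true, if_false, not_false_iff]
        linarith
      · have hle : t ≤ tlay p.1 p.2 := not_lt.mp hl
        simp only [hb, hx, hl, hle, not_true, and_true, true_and, and_false,
          false_and, if_true, if_false, not_false_iff]
        linarith
    · simp only [hb, hx, not_true, and_true, true_and, and_false, false_and,
        if_true, if_false, not_false_iff]
      norm_num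
  · by_cases hx : x t p.1 p.2 < 1
    · by_cases hl : tlay p.1 p.2 < t
      · simp only [hb, hx, hl, not_le.mpr hl, not_true, and_true, true_and, and_false,
          false_and, if_true, if_false, not_false_iff]
        linarith
      · have hle : t ≤ tlay p.1 p.2 := not_lt.mp hl
        simp only [hb, hx, hl, hle, not_true, and_true, true_and, and_false,
          false_and, if_true, if_false, not_false_iff]
        linarith
    · simp only [hb, hx, not_true, and_true, true_and, and_false, false_and,
        if_true, if_false, not_false_iff]
      norm_num
end

section
/- Let x be a feasible solution of LP-(L0), fix a layer t, let P ⊆ V and v ∈ P with max_{u∈P} x^(t)(v,u) ≥ 1/2, and let (Q1, Q2) be the pair returned by One-Half-Refine-Cut(P, v, x^(t)). Then Σ_{ {i,j}∈NFPrs₀(Q1,Q2) } Val_{i,j} + (1/4)·|{ {i,j} ∈ NFPrs₀(Q1,Q2) : {i,j} ∈ NFbd }| ≥ (1/4)·|NFPrs₀(Q1,Q2)|, where Val_{i,j} := (1 − x^(t_{i,j})(i,j)) + x^(t_{i,j}+1)(i,j) and NFbd := {{i,j} : x^(t_{i,j})(i,j) < 1}. -/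
open Finset
open scoped Classical

/-- Monotonicity of a feasible solution across layers. -/
lemma xmono_aux {V : Type*} {ℓ : ℕ} {x : ℕ → V → V → ℝ} (hfeas : LPL0FeasibleFn ℓ x)
    {a c : ℕ} (ha : 1 ≤ a) (hac : a ≤ c) (hc : c ≤ ℓ) (u w : V) :
    x c u w ≤ x a u w := by
  induction c, hac using Nat.le_induction with
  | base => exact le_rfl
  | succ n hn ih =>
    exact le_trans (hfeas.2.2.2.2.1 n (ha.trans hn) (by omega) u w) (ih (by omega))

/-- The per-pair contribution used in the main theorem. -/
noncomputable def Dfun {V : Type*} (x : ℕ → V → V → ℝ) (tlay : V → V → ℕ)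
    (t : ℕ) (i j : V) : ℝ :=
  if x t i j < 1 then
    ((1 - x (tlay i j) i j) + x (tlay i j + 1) i j
      + (if x (tlay i j) i j < 1 then (1/4 : ℝ) else 0) - 1/4)
  else 0

/-- The key per-pair lower bound. -/
lemma keyG_aux {V : Type*} {ℓ : ℕ} {x : ℕ → V → V → ℝ} (hfeas : LPL0FeasibleFn ℓ x)
    {τ t : ℕ} (hτ : τ ∈ Finset.Icc 1 ℓ) (ht : t ∈ Finset.Icc 1 ℓ)
    (i j : V) (hx : x t i j < 1) :
    min (x t i j) (1/4 + min (x t i j) (1 - x t i j))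
      ≤ (1 - x τ i j) + x (τ+1) i j + (if x τ i j < 1 then (1/4 : ℝ) else 0) := by
  simp only [Finset.mem_Icc] at hτ ht
  have hA := hfeas.2.2.2.1 τ (by simp only [Finset.mem_Icc]; omega) i j
  have hA' : 0 ≤ x (τ+1) i j := by
    rcases eq_or_lt_of_le hτ.2 with h | h
    · rw [h, hfeas.2.2.2.2.2]
    · exact (hfeas.2.2.2.1 (τ+1) (by simp only [Finset.mem_Icc]; omega) i j).1
  rcases le_or_gt t τ with htτ | hτt
  · have hAX : x τ i j ≤ x t i j := xmono_aux hfeas ht.1 htτ hτ.2 i j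
    have hlt : x τ i j < 1 := lt_of_le_of_lt hAX hx
    rw [if_pos hlt]
    have m1 := min_le_right (x t i j) (1/4 + min (x t i j) (1 - x t i j))
    have m2 := min_le_right (x t i j) (1 - x t i j)
    linarith
  · have hXA' : x t i j ≤ x (τ+1) i j := xmono_aux hfeas (by omega) (by omega) ht.2 i j
    have m1 := min_le_left (x t i j) (1/4 + min (x t i j) (1 - x t i j))
    split_ifs <;> linarith [hA.2]

set_option maxHeartbeats 1000000 in
/-- Lemma A.2 (restated): for a feasible LP-(L0) solution `x`, a layer `t`, and
the pair `(Q1, Q2)` returned by One-Half-Refine-Cut at layer `t`: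
`Σ_{{i,j}∈NFPrs₀(Q1,Q2)} Val_{i,j} + (1/4)|NFPrs₀(Q1,Q2) ∩ NFbd|
  ≥ (1/4)|NFPrs₀(Q1,Q2)|`,
where `Val_{i,j} = (1 − x^(t_{i,j})(i,j)) + x^(t_{i,j}+1)(i,j)` and
`NFbd = {{i,j} : x^(t_{i,j})(i,j) < 1}`. -/
theorem stmt11 {V : Type*} [Fintype V] [DecidableEq V]
    (ℓ : ℕ) (hℓ : 1 ≤ ℓ)
    (x : ℕ → V → V → ℝ) (hfeas : LPL0FeasibleFn ℓ x)
    (tlay : V → V → ℕ) (htsym : ∀ u w, tlay u w = tlay w u)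
    (htrange : ∀ u w : V, u ≠ w → tlay u w ∈ Finset.Icc 1 ℓ)
    (t : ℕ) (ht : t ∈ Finset.Icc 1 ℓ)
    (P : Finset V) (v : V) (hv : v ∈ P) (hmax : ∃ u ∈ P, 1 / 2 ≤ x t v u)
    (Q1 Q2 : Finset V) (hcut : (Q1, Q2) = oneHalfCut (x t) P v) :
    (∑ p ∈ (Q1 ×ˢ Q2).filter (fun p => x t p.1 p.2 < 1),
        ((1 - x (tlay p.1 p.2) p.1 p.2) + x (tlay p.1 p.2 + 1) p.1 p.2))
      + (1 / 4 : ℝ) *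
          ((Q1 ×ˢ Q2).filter
            (fun p => x t p.1 p.2 < 1 ∧ x (tlay p.1 p.2) p.1 p.2 < 1)).card
    ≥ (1 / 4 : ℝ) * ((Q1 ×ˢ Q2).filter (fun p => x t p.1 p.2 < 1)).card := by
  have hbd := hfeas.2.2.2.1 t ht
  have key : ∀ i j : V, i ≠ j → x t i j < 1 →
      min (x t i j) (1/4 + min (x t i j) (1 - x t i j))
        ≤ (1 - x (tlay i j) i j) + x (tlay i j + 1) i j
          + (if x (tlay i j) i j < 1 then (1/4 : ℝ) else 0) :=
    fun i j hij hx => keyG_aux hfeas (htrange i j hij) ht i j hx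
  -- reduce the goal to nonnegativity of a double sum of `Dfun`
  suffices h : 0 ≤ ∑ i ∈ Q1, ∑ j ∈ Q2, Dfun x tlay t i j by
    have e : (∑ p ∈ (Q1 ×ˢ Q2).filter (fun p => x t p.1 p.2 < 1),
        ((1 - x (tlay p.1 p.2) p.1 p.2) + x (tlay p.1 p.2 + 1) p.1 p.2))
      + (1 / 4 : ℝ) *
          ((Q1 ×ˢ Q2).filter
            (fun p => x t p.1 p.2 < 1 ∧ x (tlay p.1 p.2) p.1 p.2 < 1)).card
      - (1 / 4 : ℝ) * ((Q1 ×ˢ Q2).filter (fun p => x t p.1 p.2 < 1)).card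
      = ∑ i ∈ Q1, ∑ j ∈ Q2, Dfun x tlay t i j := by
      rw [← Finset.sum_product']
      rw [Finset.sum_filter, Finset.card_filter, Finset.card_filter]
      push_cast
      rw [Finset.mul_sum, Finset.mul_sum, ← Finset.sum_add_distrib,
        ← Finset.sum_sub_distrib]
      refine Finset.sum_congr rfl fun p _ => ?_
      by_cases h1 : x t p.1 p.2 < 1 <;>
        by_cases h2 : x (tlay p.1 p.2) p.1 p.2 < 1 <;>
        simp [Dfun, h1, h2] <;> ring
    linarith [e, h]
  -- now analyze the two possible outputs of the procedure
  unfold oneHalfCut at hcut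
  split_ifs at hcut with hC
  · -- Case A : Q1 = {v}, Q2 = P \ {v}
    simp only [Prod.mk.injEq] at hcut
    obtain ⟨rfl, rfl⟩ := hcut
    rw [Finset.sum_singleton]
    have hvv : x t v v = 0 := hfeas.2.1 t ht v
    have hvb : v ∈ cutBall (x t) v P (1/2) := by
      simp only [cutBall, Finset.mem_filter, hvv]
      exact ⟨hv, by norm_num⟩
    have hvB3 : v ∈ cutBall (x t) v P (3/4) := by
      simp only [cutBall, Finset.mem_filter, hvv]
      exact ⟨hv, by norm_num⟩
    have hbB3 : cutBall (x t) v P (1/2) ⊆ cutBall (x t) v P (3/4) := by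
      intro u hu
      simp only [cutBall, Finset.mem_filter] at hu ⊢
      exact ⟨hu.1, by linarith [hu.2]⟩
    -- pointwise lower bound on `Dfun v j`
    have hpt : ∀ j ∈ P \ {v},
        (if j ∈ cutBall (x t) v P (1/2) then x t v j - 1/2 else 0)
          + (if j ∈ cutBall (x t) v P (3/4) then (1/4 : ℝ) else 0)
          ≤ Dfun x tlay t v j := by
      intro j hj
      have hj' : j ∈ P ∧ j ≠ v := by simpa [Finset.mem_sdiff] using hj
      have hvj : v ≠ j := (hj'.2).symm
      have hX0 : 0 ≤ x t v j := (hbd v j).1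
      by_cases hjb : j ∈ cutBall (x t) v P (1/2)
      · have hjB3 := hbB3 hjb
        have hXlt : x t v j < 1/2 := (Finset.mem_filter.mp hjb).2
        have hk := key v j hvj (by linarith)
        rw [if_pos hjb, if_pos hjB3]
        have m1 : min (x t v j) (1 - x t v j) = x t v j := min_eq_left (by linarith)
        have m2 : min (x t v j) (1/4 + min (x t v j) (1 - x t v j)) = x t v j := by
          rw [m1]; exact min_eq_left (by linarith)
        rw [m2] at hk
        simp only [Dfun, if_pos (show x t v j < 1 by linarith)]
        linarith
      · by_cases hjB3 : j ∈ cutBall (x t) v P (3/4)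
        · have h2 : x t v j < 3/4 := (Finset.mem_filter.mp hjB3).2
          have h1 : 1/2 ≤ x t v j := by
            by_contra hcon
            exact hjb (Finset.mem_filter.mpr ⟨hj'.1, by linarith⟩)
          have hk := key v j hvj (by linarith)
          rw [if_neg hjb, if_pos hjB3]
          have m2 : (1:ℝ)/4 ≤ min (x t v j) (1 - x t v j) :=
            le_min (by linarith) (by linarith)
          have m1 : (1:ℝ)/2 ≤ min (x t v j) (1/4 + min (x t v j) (1 - x t v j)) :=
            le_min (by linarith) (by linarith)
          simp only [Dfun, if_pos (show x t v j < 1 by linarith)]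
          linarith
        · have h1 : 3/4 ≤ x t v j := by
            by_contra hcon
            exact hjB3 (Finset.mem_filter.mpr ⟨hj'.1, by linarith⟩)
          rw [if_neg hjb, if_neg hjB3]
          by_cases hc1 : x t v j < 1
          · have hk := key v j hvj hc1
            have m2 : (0:ℝ) ≤ min (x t v j) (1 - x t v j) :=
              le_min (by linarith) (by linarith)
            have m1 : (1:ℝ)/4 ≤ min (x t v j) (1/4 + min (x t v j) (1 - x t v j)) :=
              le_min (by linarith) (by linarith)
            simp only [Dfun, if_pos hc1]
            linarith
          · simp [Dfun, hc1]
    have hstep := Finset.sum_le_sum hpt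
    -- evaluate the lower-bounding sum
    have hs1 : (P \ {v}).filter (fun j => j ∈ cutBall (x t) v P (1/2))
        = (cutBall (x t) v P (1/2)).erase v := by
      ext u
      simp only [cutBall, Finset.mem_filter, Finset.mem_erase, Finset.mem_sdiff,
        Finset.mem_singleton]
      tauto
    have hs2 : (P \ {v}).filter (fun j => j ∈ cutBall (x t) v P (3/4))
        = (cutBall (x t) v P (3/4)).erase v := by
      ext u
      simp only [cutBall, Finset.mem_filter, Finset.mem_erase, Finset.mem_sdiff,
        Finset.mem_singleton]
      tauto
    have e1 : ∑ j ∈ P \ {v},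
        ((if j ∈ cutBall (x t) v P (1/2) then x t v j - 1/2 else 0)
          + (if j ∈ cutBall (x t) v P (3/4) then (1/4 : ℝ) else 0))
        = (∑ j ∈ (cutBall (x t) v P (1/2)).erase v, (x t v j - 1/2))
          + ∑ j ∈ (cutBall (x t) v P (3/4)).erase v, (1/4 : ℝ) := by
      rw [Finset.sum_add_distrib, ← Finset.sum_filter, ← Finset.sum_filter, hs1, hs2]
    have e2 : ∑ j ∈ (cutBall (x t) v P (1/2)).erase v, (x t v j - 1/2)
        = (∑ q ∈ cutBall (x t) v P (1/2), x t v q)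
          - (1/2) * (cutBall (x t) v P (1/2)).card + 1/2 := by
      have h3 := Finset.sum_erase_add (cutBall (x t) v P (1/2))
        (fun j => x t v j - 1/2) hvb
      have h4 : ∑ j ∈ cutBall (x t) v P (1/2), (x t v j - 1/2)
          = (∑ j ∈ cutBall (x t) v P (1/2), x t v j)
            - ((cutBall (x t) v P (1/2)).card : ℝ) * (1/2) := by
        rw [Finset.sum_sub_distrib, Finset.sum_const, nsmul_eq_mul]
      simp only [hvv] at h3
      linarith [h3, h4]
    have e3 : (((cutBall (x t) v P (3/4)).erase v).card : ℝ)
        = ((cutBall (x t) v P (3/4)).card : ℝ) - 1 := by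
      rw [Finset.card_erase_of_mem hvB3]
      have : 1 ≤ (cutBall (x t) v P (3/4)).card :=
        Finset.card_pos.mpr ⟨v, hvB3⟩
      push_cast [Nat.cast_sub this]
      ring
    have e4 : ∑ j ∈ (cutBall (x t) v P (3/4)).erase v, (1/4 : ℝ)
        = (((cutBall (x t) v P (3/4)).card : ℝ) - 1) * (1/4) := by
      rw [Finset.sum_const, nsmul_eq_mul, e3]
    refine le_trans ?_ hstep
    rw [e1, e2, e4]
    linarith [hC]
  · -- Case B : Q1 = B_{1/2}, Q2 = P \ B_{1/2}
    simp only [Prod.mk.injEq] at hcut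
    obtain ⟨rfl, rfl⟩ := hcut
    have hC' : ∑ q ∈ cutBall (x t) v P (1/2), x t v q
        < (1/2 : ℝ) * (cutBall (x t) v P (1/2)).card
          - (1/4) * (cutBall (x t) v P (3/4)).card - 1/4 := by
      have := not_le.mp hC
      linarith
    have hbB3 : cutBall (x t) v P (1/2) ⊆ cutBall (x t) v P (3/4) := by
      intro u hu
      simp only [cutBall, Finset.mem_filter] at hu ⊢
      exact ⟨hu.1, by linarith [hu.2]⟩
    have hcard : ((cutBall (x t) v P (1/2)).card : ℝ)
        ≤ ((cutBall (x t) v P (3/4)).card : ℝ) :=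
      Nat.cast_le.mpr (Finset.card_le_card hbB3)
    rw [Finset.sum_comm]
    refine Finset.sum_nonneg fun j hj => ?_
    have hj' : j ∈ P ∧ j ∉ cutBall (x t) v P (1/2) := by
      simpa [Finset.mem_sdiff] using hj
    have hXvj : 1/2 ≤ x t v j := by
      by_contra hcon
      exact hj'.2 (Finset.mem_filter.mpr ⟨hj'.1, by linarith⟩)
    by_cases hj3 : x t v j < 3/4
    · -- the averaging case
      have hpt : ∀ i ∈ cutBall (x t) v P (1/2),
          (1/4 : ℝ) - x t v i ≤ Dfun x tlay t i j := by
        intro i hi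
        have hXvi : x t v i < 1/2 := (Finset.mem_filter.mp hi).2
        have hXvi0 : 0 ≤ x t v i := (hbd v i).1
        have hij : i ≠ j := fun h => hj'.2 (h ▸ hi)
        have tri1 : x t v j ≤ x t v i + x t i j := hfeas.2.2.1 t ht v j i
        have symiv : x t i v = x t v i := hfeas.1 t ht i v
        have tri2 : x t i j ≤ x t v i + x t v j := by
          have h5 := hfeas.2.2.1 t ht i j v
          rw [symiv] at h5
          linarith
        by_cases hc1 : x t i j < 1
        · have hk := key i j hij hc1
          have m2 : (1/4 : ℝ) - x t v i ≤ min (x t i j) (1 - x t i j) :=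
            le_min (by linarith) (by linarith)
          have m1 : (1/2 : ℝ) - x t v i
              ≤ min (x t i j) (1/4 + min (x t i j) (1 - x t i j)) :=
            le_min (by linarith) (by linarith)
          simp only [Dfun, if_pos hc1]
          linarith
        · have h1 : 1 ≤ x t i j := not_lt.mp hc1
          simp only [Dfun, if_neg hc1]
          linarith
      have hsum : ∑ i ∈ cutBall (x t) v P (1/2), ((1/4 : ℝ) - x t v i)
          = (1/4) * ((cutBall (x t) v P (1/2)).card : ℝ)
            - ∑ i ∈ cutBall (x t) v P (1/2), x t v i := by
        rw [Finset.sum_sub_distrib, Finset.sum_const, nsmul_eq_mul]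
        ring
      have hstep := Finset.sum_le_sum hpt
      refine le_trans ?_ hstep
      rw [hsum]
      linarith
    · -- the pointwise case : x t v j ≥ 3/4
      have h34 : 3/4 ≤ x t v j := not_lt.mp hj3
      refine Finset.sum_nonneg fun i hi => ?_
      have hXvi : x t v i < 1/2 := (Finset.mem_filter.mp hi).2
      have hij : i ≠ j := fun h => hj'.2 (h ▸ hi)
      have tri1 : x t v j ≤ x t v i + x t i j := hfeas.2.2.1 t ht v j i
      have hXvi0 : 0 ≤ x t v i := (hbd v i).1
      have hX0 : 0 ≤ x t i j := (hbd i j).1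
      by_cases hc1 : x t i j < 1
      · have hk := key i j hij hc1
        have m2 : (0:ℝ) ≤ min (x t i j) (1 - x t i j) :=
          le_min (by linarith) (by linarith)
        have m1 : (1/4 : ℝ) ≤ min (x t i j) (1/4 + min (x t i j) (1 - x t i j)) :=
          le_min (by linarith) (by linarith)
        simp only [Dfun, if_pos hc1]
        linarith
      · simp [Dfun, hc1]
end
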